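/- Let S be a finite connected undirected graph on q nodes, possibly with self-loops, with m edges, and let c ∈ ℕ^m (strictly positive on every edge) and y = Zc ∈ ℕ^q with 1^T y ≥ 3. Then the complete S-partite graph K_y, having y_i vertices over node u_i, contains a Hamilton cycle. -/

import Mathlib

set_option linter.unusedSectionVars false

namespace EulerAux
variable {α : Type*} [DecidableEq α]

/-- degree of `x` in a single undirected edge (self-loop counts 2). -/
def degS (s : Sym2 α) (x : α) : ℕ :=
  Sym2.lift ⟨fun a b => (if a = x then 1 else 0) + (if b = x then 1 else 0),
    fun _ _ => by ring⟩ s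

@[simp] lemma degS_mk (a b x : α) :
    degS s(a, b) x = (if a = x then 1 else 0) + (if b = x then 1 else 0) := rfl

lemma exists_of_degS_pos {s : Sym2 α} {x : α} (h : 0 < degS s x) :
    ∃ c, s = s(x, c) := by
  induction s using Sym2.inductionOn with
  | hf a b =>
    simp only [degS_mk] at h
    by_cases ha : a = x
    · exact ⟨b, by rw [ha]⟩
    · by_cases hb : b = x
      · exact ⟨a, by rw [hb, Sym2.eq_swap]⟩
      · simp [ha, hb] at h

/-- degree of `x` in a multiset of undirected edges. -/
def deg (E : Multiset (Sym2 α)) (x : α) : ℕ := (E.map (fun s => degS s x)).sum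

@[simp] lemma deg_zero (x : α) : deg (0 : Multiset (Sym2 α)) x = 0 := rfl

@[simp] lemma deg_add (E F : Multiset (Sym2 α)) (x : α) :
    deg (E + F) x = deg E x + deg F x := by
  simp [deg]

@[simp] lemma deg_cons (s : Sym2 α) (E : Multiset (Sym2 α)) (x : α) :
    deg (s ::ₘ E) x = degS s x + deg E x := by
  simp [deg]

@[simp] lemma deg_replicate (n : ℕ) (s : Sym2 α) (x : α) :
    deg (Multiset.replicate n s) x = n * degS s x := by
  simp [deg, Multiset.map_replicate, Multiset.sum_replicate, smul_eq_mul]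

lemma deg_eq_sub_add {E F : Multiset (Sym2 α)} (h : F ≤ E) (x : α) :
    deg E x = deg (E - F) x + deg F x := by
  conv_lhs => rw [← tsub_add_cancel_of_le h]
  simp

lemma deg_pos_of_mem {E : Multiset (Sym2 α)} {s : Sym2 α} (hs : s ∈ E) {x : α}
    (h : 0 < degS s x) : 0 < deg E x := by
  obtain ⟨E', rfl⟩ := Multiset.exists_cons_of_mem hs
  simp only [deg_cons]
  omega

lemma exists_edge_of_deg_pos {E : Multiset (Sym2 α)} {x : α} (h : 0 < deg E x) :
    ∃ c, s(x, c) ∈ E := by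
  by_contra hc
  push_neg at hc
  have : ∀ s ∈ E, degS s x = 0 := by
    intro s hs
    by_contra h0
    obtain ⟨c, rfl⟩ := exists_of_degS_pos (Nat.pos_of_ne_zero h0)
    exact hc c hs
  have : deg E x = 0 := by
    refine Multiset.sum_eq_zero ?_
    intro n hn
    obtain ⟨s, hs, rfl⟩ := Multiset.mem_map.1 hn
    exact this s hs
  omega

/-- edges of a walk given as a list of vertices. -/
def wEdges : List α → Multiset (Sym2 α)
  | a :: b :: t => s(a, b) ::ₘ wEdges (b :: t)
  | _ => 0

@[simp] lemma wEdges_nil : wEdges ([] : List α) = 0 := rfl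
@[simp] lemma wEdges_single (a : α) : wEdges [a] = 0 := rfl
@[simp] lemma wEdges_cons_cons (a b : α) (t : List α) :
    wEdges (a :: b :: t) = s(a, b) ::ₘ wEdges (b :: t) := rfl

lemma card_wEdges : ∀ (a : α) (t : List α), (wEdges (a :: t)).card = t.length
  | _, [] => rfl
  | a, b :: t => by simp [card_wEdges b t]

/-- key counting lemma: degrees in a walk vs endpoint indicators. -/
lemma deg_wEdges_aux : ∀ (t : List α) (a x : α),
    deg (wEdges (a :: t)) x + (if t.getLastD a = x then 1 else 0)
      + (if a = x then 1 else 0) = 2 * (a :: t).count x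
  | [], a, x => by
    by_cases h : a = x <;> simp [h, List.count_cons]
  | b :: t, a, x => by
    have ih := deg_wEdges_aux t b x
    simp only [wEdges_cons_cons, deg_cons, degS_mk, List.getLastD_cons,
      List.count_cons] at *
    by_cases h1 : a = x <;> by_cases h2 : b = x <;>
      simp [h1, h2] at * <;> omega

lemma wEdges_concat : ∀ (t : List α) (a c : α),
    wEdges (a :: (t ++ [c])) = s(t.getLastD a, c) ::ₘ wEdges (a :: t)
  | [], a, c => by simp
  | b :: t, a, c => by
    simp only [List.cons_append, wEdges_cons_cons, wEdges_concat t b c,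
      List.getLastD_cons]
    exact Multiset.cons_swap _ _ _

lemma wEdges_split : ∀ (L : List α) (x : α) (M : List α),
    wEdges (L ++ x :: M) = wEdges (L ++ [x]) + wEdges (x :: M)
  | [], x, M => by simp
  | [a], x, M => by simp
  | a :: b :: L, x, M => by
    have ih := wEdges_split (b :: L) x M
    simp only [List.cons_append] at *
    simp [ih]

lemma mem_of_degS_pos_of_mem_wEdges :
    ∀ (L : List α) {s : Sym2 α}, s ∈ wEdges L → ∀ {x : α}, 0 < degS s x → x ∈ L
  | a :: b :: t, s, hs, x, hx => by
    rcases Multiset.mem_cons.1 hs with h | h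
    · subst h
      simp only [degS_mk] at hx
      by_cases h1 : a = x
      · simp [h1]
      · by_cases h2 : b = x
        · simp [h2]
        · simp [h1, h2] at hx
    · exact List.mem_cons_of_mem a (mem_of_degS_pos_of_mem_wEdges (b :: t) h hx)

lemma chain'_of_wEdges_le {E : Multiset (Sym2 α)} :
    ∀ (L : List α), wEdges L ≤ E → List.Chain' (fun u v => s(u, v) ∈ E) L
  | [], _ => List.isChain_nil
  | [_], _ => List.isChain_singleton _
  | a :: b :: t, h => by
    unfold List.Chain'
    rw [List.isChain_cons_cons]
    rw [wEdges_cons_cons] at h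
    exact ⟨Multiset.mem_of_le h (Multiset.mem_cons_self _ _),
      chain'_of_wEdges_le (b :: t) (le_trans (Multiset.le_cons_self _ _) h)⟩

end EulerAux

namespace EulerAux
variable {α : Type*} [DecidableEq α]

/-- edge multiset of the closed walk `a :: t ++ [a]`. -/
def cEdges (a : α) (t : List α) : Multiset (Sym2 α) := wEdges (a :: (t ++ [a]))

lemma card_cEdges (a : α) (t : List α) : (cEdges a t).card = t.length + 1 := by
  simp [cEdges, card_wEdges]

lemma deg_cEdges (a : α) (t : List α) (x : α) :
    deg (cEdges a t) x = 2 * (a :: t).count x := by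
  have h := deg_wEdges_aux (t ++ [a]) a x
  have hl : (t ++ [a]).getLastD a = a := List.getLastD_concat
  rw [hl] at h
  have hc : (a :: (t ++ [a])).count x = (a :: t).count x + (if a = x then 1 else 0) := by
    by_cases hax : a = x <;> simp [List.count_cons, List.count_append, hax]
  rw [hc] at h
  rw [cEdges]
  by_cases hax : a = x <;> simp only [hax, if_pos, if_neg, ite_true, ite_false] at h ⊢ <;> omega

lemma mem_of_mem_cEdges {a : α} {t : List α} {s : Sym2 α} (hs : s ∈ cEdges a t)
    {x : α} (hx : 0 < degS s x) : x ∈ a :: t := by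
  have := mem_of_degS_pos_of_mem_wEdges _ hs hx
  simp only [List.mem_cons, List.mem_append, List.mem_singleton] at this ⊢
  tauto

/-- rotation of a closed walk. -/
lemma rotate_cEdges {a : α} {t : List α} {v : α} (hv : v ∈ a :: t) :
    ∃ t' : List α, cEdges v t' = cEdges a t ∧ t'.length = t.length := by
  rcases List.mem_cons.1 hv with rfl | hv
  · exact ⟨t, rfl, rfl⟩
  · obtain ⟨p', s, rfl⟩ := List.append_of_mem hv
    refine ⟨s ++ a :: p', ?_, by simp; omega⟩
    have h1 : cEdges a (p' ++ v :: s) = wEdges ((a :: p') ++ [v]) + wEdges (v :: (s ++ [a])) := by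
      rw [cEdges]
      have : a :: ((p' ++ v :: s) ++ [a]) = (a :: p') ++ v :: (s ++ [a]) := by simp
      rw [this, wEdges_split]
    have h2 : cEdges v (s ++ a :: p') = wEdges ((v :: s) ++ [a]) + wEdges (a :: (p' ++ [v])) := by
      rw [cEdges]
      have : v :: ((s ++ a :: p') ++ [v]) = (v :: s) ++ a :: (p' ++ [v]) := by simp
      rw [this, wEdges_split]
    rw [h1, h2, add_comm]
    simp only [List.cons_append]

/-- splicing two closed walks at a common start. -/
lemma splice_cEdges (v : α) (t2 t' : List α) :
    cEdges v (t2 ++ v :: t') = cEdges v t2 + cEdges v t' := by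
  rw [cEdges, cEdges, cEdges]
  have : v :: ((t2 ++ v :: t') ++ [v]) = (v :: t2) ++ v :: (t' ++ [v]) := by simp
  rw [this, wEdges_split]
  simp only [List.cons_append]

lemma cons_le_of_mem_sub {E W : Multiset (Sym2 α)} {s : Sym2 α} (hW : W ≤ E)
    (hs : s ∈ E - W) : s ::ₘ W ≤ E := by
  rw [Multiset.le_iff_count] at *
  intro x
  have hc := Multiset.count_pos.2 hs
  rw [Multiset.count_sub] at hc
  by_cases hxs : x = s
  · subst hxs
    rw [Multiset.count_cons_self]
    omega
  · rw [Multiset.count_cons_of_ne hxs]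
    exact hW x

/-- Extraction: from a vertex of positive degree in an even graph, a closed trail. -/
lemma exists_closed_trail {E : Multiset (Sym2 α)} (hdeg : ∀ x, Even (deg E x))
    {v : α} (hv : 0 < deg E v) : ∃ t, cEdges v t ≤ E := by
  obtain ⟨c, hc⟩ := exists_edge_of_deg_pos hv
  have h0 : wEdges (v :: [c]) ≤ E := by
    simpa [Multiset.singleton_le] using hc
  -- grow a trail with fuel
  suffices h : ∀ (k : ℕ) (l : List α), l ≠ [] → wEdges (v :: l) ≤ E →
      E.card ≤ l.length + k → ∃ t, cEdges v t ≤ E by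
    exact h E.card [c] (by simp) h0 (by omega)
  intro k
  induction k with
  | zero =>
    intro l hl hle hcard
    -- impossible unless closed; but we show closed case directly
    by_cases hb : l.getLastD v = v
    · have hlast : l = l.dropLast ++ [v] := by
        conv_lhs => rw [← List.dropLast_append_getLast hl]
        rw [List.getLastD_eq_getLast? , List.getLast?_eq_getLast hl] at hb
        simp at hb
        rw [hb]
      exact ⟨l.dropLast, by rwa [cEdges, ← hlast]⟩
    · -- extend; contradiction with card
      have hwc : (wEdges (v :: l)).card = l.length := card_wEdges v l
      set b := l.getLastD v with hbdef
      have hodd : ¬ Even (deg (wEdges (v :: l)) b) := by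
        have h := deg_wEdges_aux l v b
        have hvb : v ≠ b := fun h' => hb h'.symm
        rw [← hbdef, if_pos rfl, if_neg hvb] at h
        rintro ⟨r0, hr0⟩
        omega
      have hsub := deg_eq_sub_add hle b
      have hEb := hdeg b
      have hpos : 0 < deg (E - wEdges (v :: l)) b := by
        rcases hEb with ⟨r, hr⟩
        by_contra h0'
        push_neg at h0'
        have h00 : deg (E - wEdges (v :: l)) b = 0 := by omega
        exact hodd ⟨r, by omega⟩
      obtain ⟨c2, hc2⟩ := exists_edge_of_deg_pos hpos
      have := cons_le_of_mem_sub hle hc2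
      have hcard2 : (s(b, c2) ::ₘ wEdges (v :: l)).card ≤ E.card :=
        Multiset.card_le_card this
      simp [hwc] at hcard2
      omega
  | succ k ih =>
    intro l hl hle hcard
    by_cases hb : l.getLastD v = v
    · have hlast : l = l.dropLast ++ [v] := by
        conv_lhs => rw [← List.dropLast_append_getLast hl]
        rw [List.getLastD_eq_getLast? , List.getLast?_eq_getLast hl] at hb
        simp at hb
        rw [hb]
      exact ⟨l.dropLast, by rwa [cEdges, ← hlast]⟩
    · set b := l.getLastD v with hbdef
      have hodd : ¬ Even (deg (wEdges (v :: l)) b) := by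
        have h := deg_wEdges_aux l v b
        have hvb : v ≠ b := fun h' => hb h'.symm
        rw [← hbdef, if_pos rfl, if_neg hvb] at h
        rintro ⟨r0, hr0⟩
        omega
      have hsub := deg_eq_sub_add hle b
      have hEb := hdeg b
      have hpos : 0 < deg (E - wEdges (v :: l)) b := by
        rcases hEb with ⟨r, hr⟩
        by_contra h0'
        push_neg at h0'
        have h00 : deg (E - wEdges (v :: l)) b = 0 := by omega
        exact hodd ⟨r, by omega⟩
      obtain ⟨c2, hc2⟩ := exists_edge_of_deg_pos hpos
      have hle2 : wEdges (v :: (l ++ [c2])) ≤ E := by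
        rw [wEdges_concat, ← hbdef]
        exact cons_le_of_mem_sub hle hc2
      exact ih (l ++ [c2]) (by simp) hle2 (by simp; omega)

end EulerAux

namespace EulerAux
variable {α : Type*} [DecidableEq α]

lemma degS_pos_left (a b : α) : 0 < degS s(a, b) a := by
  rw [degS_mk, if_pos rfl]; omega

lemma degS_pos_right (a b : α) : 0 < degS s(a, b) b := by
  rw [Sym2.eq_swap]; exact degS_pos_left b a

lemma exists_pair_of_ne_zero {E : Multiset (Sym2 α)} (h : E ≠ 0) :
    ∃ a b, s(a, b) ∈ E := by
  obtain ⟨s0, hs0⟩ := Multiset.exists_mem_of_ne_zero h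
  revert hs0
  induction s0 using Sym2.inductionOn with
  | hf a b => exact fun hs0 => ⟨a, b, hs0⟩

/-- Euler circuit theorem for multigraphs of `Sym2` edges. -/
theorem euler {E : Multiset (Sym2 α)} (hdeg : ∀ x, Even (deg E x))
    (hconn : ∀ u w, 0 < deg E u → 0 < deg E w →
      Relation.ReflTransGen (fun p r => s(p, r) ∈ E) u w)
    (hne : E ≠ 0) : ∃ a t, cEdges a t = E := by
  obtain ⟨u1, u2, hmem⟩ := exists_pair_of_ne_zero hne
  have hdegu : 0 < deg E u1 := deg_pos_of_mem hmem (degS_pos_left u1 u2)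
  obtain ⟨t0, ht0⟩ := exists_closed_trail hdeg hdegu
  suffices h : ∀ (k : ℕ) (a : α) (t : List α), cEdges a t ≤ E →
      E.card ≤ t.length + 1 + k → ∃ a' t', cEdges a' t' = E by
    refine h E.card u1 t0 ht0 (by omega)
  intro k
  induction k with
  | zero =>
    intro a t hle hcard
    exact ⟨a, t, Multiset.eq_of_le_of_card_le hle (by rw [card_cEdges]; omega)⟩
  | succ k ih =>
    intro a t hle hcard
    by_cases heq : cEdges a t = E
    · exact ⟨a, t, heq⟩
    set W := cEdges a t with hW
    have hE' : E - W ≠ 0 := by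
      intro h0
      exact heq (le_antisymm hle (tsub_eq_zero_iff_le.1 h0))
    have hdeg' : ∀ x, Even (deg (E - W) x) := by
      intro x
      have h1 := deg_eq_sub_add hle x
      obtain ⟨p, hp⟩ := hdeg x
      have h3 : Even (deg W x) := by rw [hW, deg_cEdges]; exact even_two_mul _
      obtain ⟨r, hr⟩ := h3
      exact ⟨p - r, by omega⟩
    obtain ⟨x1, x2, hmem2⟩ := exists_pair_of_ne_zero hE'
    have hu : 0 < deg (E - W) x1 := deg_pos_of_mem hmem2 (degS_pos_left x1 x2)
    have hWle : ∀ x, deg (E - W) x ≤ deg E x := fun x => by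
      have := deg_eq_sub_add hle x; omega
    have hdegEa : 0 < deg E a := by
      have h1 : deg W a = 2 * (a :: t).count a := by rw [hW, deg_cEdges]
      have h2 : 0 < (a :: t).count a := List.count_pos_iff.2 List.mem_cons_self
      have h3 := deg_eq_sub_add hle a
      omega
    have key : ∀ w, Relation.ReflTransGen (fun p r => s(p, r) ∈ E) w a →
        0 < deg (E - W) w → ∃ v, v ∈ a :: t ∧ 0 < deg (E - W) v := by
      intro w hreach
      induction hreach using Relation.ReflTransGen.head_induction_on with
      | refl => exact fun hw => ⟨a, List.mem_cons_self, hw⟩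
      | @head x x' hstep htail ih2 =>
        intro hw
        have hsplit : s(x, x') ∈ (E - W) + W := by
          rwa [tsub_add_cancel_of_le hle]
        rcases Multiset.mem_add.1 hsplit with h | h
        · exact ih2 (deg_pos_of_mem h (degS_pos_right x x'))
        · exact ⟨x, mem_of_mem_cEdges h (degS_pos_left x x'), hw⟩
    have hreachw := hconn x1 a (lt_of_lt_of_le hu (hWle x1)) hdegEa
    obtain ⟨v, hvmem, hvdeg⟩ := key x1 hreachw hu
    obtain ⟨t', ht'eq, ht'len⟩ := rotate_cEdges hvmem
    obtain ⟨t2, ht2⟩ := exists_closed_trail hdeg' hvdeg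
    have hsplice : cEdges v (t2 ++ v :: t') ≤ E := by
      rw [splice_cEdges, Multiset.le_iff_count]
      intro x
      have h1 := Multiset.le_iff_count.1 ht2 x
      have h2 := Multiset.le_iff_count.1 hle x
      rw [Multiset.count_add, ht'eq, ← hW]
      rw [Multiset.count_sub] at h1
      omega
    refine ih v (t2 ++ v :: t') hsplice ?_
    simp only [List.length_append, List.length_cons]
    omega

end EulerAux

namespace HamAux
open SimpleGraph

variable {ι : Type*} [DecidableEq ι]

/-- label each occurrence in a list by the count of later occurrences. -/
def lab : List ι → List (ι × ℕ)
  | [] => []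
  | a :: t => (a, t.count a) :: lab t

@[simp] lemma lab_nil : lab ([] : List ι) = [] := rfl
@[simp] lemma lab_cons (a : ι) (t : List ι) : lab (a :: t) = (a, t.count a) :: lab t := rfl

lemma map_fst_lab : ∀ L : List ι, (lab L).map Prod.fst = L
  | [] => rfl
  | a :: t => by simp [map_fst_lab t]

lemma length_lab (L : List ι) : (lab L).length = L.length := by
  conv_rhs => rw [← map_fst_lab L]
  rw [List.length_map]

lemma snd_lt_of_mem_lab : ∀ {L : List ι} {p : ι × ℕ}, p ∈ lab L → p.2 < L.count p.1
  | a :: t, p, hp => by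
    rcases List.mem_cons.1 hp with rfl | hp
    · simp [List.count_cons]
    · have := snd_lt_of_mem_lab hp
      have h2 : t.count p.1 ≤ (a :: t).count p.1 := by
        simp [List.count_cons]
      omega

lemma nodup_lab : ∀ L : List ι, (lab L).Nodup
  | [] => List.nodup_nil
  | a :: t => by
    rw [lab_cons, List.nodup_cons]
    refine ⟨fun hmem => ?_, nodup_lab t⟩
    have := snd_lt_of_mem_lab hmem
    simp at this
  termination_by L => L.length

variable {V : Type*}

/-- edge list of a vertex list. -/
def elist : List V → List (Sym2 V)
  | a :: b :: t => s(a, b) :: elist (b :: t)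
  | _ => []

@[simp] lemma elist_nil : elist ([] : List V) = [] := rfl
@[simp] lemma elist_single (a : V) : elist [a] = [] := rfl
@[simp] lemma elist_cons_cons (a b : V) (t : List V) :
    elist (a :: b :: t) = s(a, b) :: elist (b :: t) := rfl

lemma mem_elist : ∀ {L : List V} {s : Sym2 V}, s ∈ elist L →
    ∃ i : ℕ, ∃ h : i + 1 < L.length, s = s(L[i]'(by omega), L[i + 1]'h)
  | a :: b :: t, s, hs => by
    rcases List.mem_cons.1 hs with rfl | hs
    · exact ⟨0, by simp, rfl⟩
    · obtain ⟨i, hi, heq⟩ := mem_elist hs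
      refine ⟨i + 1, by simpa using hi, ?_⟩
      simpa using heq

/-- build a walk from a chain of adjacencies. -/
def mkWalk (G : SimpleGraph V) : (v : V) → (l : List V) → (w : V) →
    List.Chain G.Adj v (l ++ [w]) → G.Walk v w
  | _, [], _, h => Walk.cons (List.chain_cons.1 h).1 Walk.nil
  | v, x :: l, w, h =>
    Walk.cons (List.chain_cons.1 h).1 (mkWalk G x l w (List.chain_cons.1 h).2)

@[simp] lemma support_mkWalk (G : SimpleGraph V) :
    ∀ (v : V) (l : List V) (w : V) (h : List.Chain G.Adj v (l ++ [w])),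
      (mkWalk G v l w h).support = v :: (l ++ [w])
  | _, [], _, _ => rfl
  | v, x :: l, w, h => by
    simp [mkWalk, support_mkWalk G x l w (List.chain_cons.1 h).2]

@[simp] lemma edges_mkWalk (G : SimpleGraph V) :
    ∀ (v : V) (l : List V) (w : V) (h : List.Chain G.Adj v (l ++ [w])),
      (mkWalk G v l w h).edges = elist (v :: (l ++ [w]))
  | _, [], _, _ => rfl
  | v, x :: l, w, h => by
    simp [mkWalk, edges_mkWalk G x l w (List.chain_cons.1 h).2]

/-- A cyclically-adjacent nodup list covering all vertices gives a Hamiltonian cycle. -/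
lemma ham_of_list [DecidableEq V] (G : SimpleGraph V) (v b : V) (rest : List V)
    (hrest : rest ≠ []) (hnd : (v :: b :: rest).Nodup)
    (hchain : List.Chain G.Adj v ((b :: rest) ++ [v]))
    (hall : ∀ x, x ∈ v :: b :: rest) :
    ∃ p : G.Walk v v, p.IsHamiltonianCycle := by
  have h1 := (List.chain_cons.1 hchain).1
  have h2 : List.Chain G.Adj b (rest ++ [v]) := (List.chain_cons.1 hchain).2
  set q : G.Walk b v := mkWalk G b rest v h2 with hq
  have hperm : List.Perm ((b :: rest) ++ [v]) (v :: b :: rest) :=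
    List.perm_append_singleton v (b :: rest)
  have hndL2 : ((b :: rest) ++ [v]).Nodup := (List.Perm.nodup_iff hperm).2 hnd
  refine ⟨Walk.cons h1 q, ?_, ?_⟩
  · -- IsCycle
    rw [Walk.cons_isCycle_iff]
    constructor
    · exact Walk.IsPath.mk' (by rw [hq, support_mkWalk]; exact hndL2)
    · -- s(v, b) ∉ q.edges
      intro hmem
      rw [hq, edges_mkWalk] at hmem
      obtain ⟨i, hi, heq⟩ := mem_elist hmem
      have hlen : (b :: (rest ++ [v])).length = rest.length + 2 := by simp
      have hgv : (b :: (rest ++ [v]))[rest.length + 1]'(by simp) = v :=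
        List.getElem_concat_length (l := b :: rest) (a := v) (i := rest.length + 1) (by simp) (by simp)
      have hgb : (b :: (rest ++ [v]))[0]'(by simp) = b := rfl
      have hnd2 : (b :: (rest ++ [v])).Nodup := hndL2
      rcases Sym2.eq_iff.1 heq with ⟨hv', hb'⟩ | ⟨hv', hb'⟩
      · -- v = L[i], b = L[i+1]
        have hieq : i = rest.length + 1 := hnd2.getElem_inj_iff.1 (hv'.symm.trans hgv.symm)
        rw [hlen] at hi
        omega
      · -- v = L[i+1], b = L[i]
        have hieq : i + 1 = rest.length + 1 :=
          hnd2.getElem_inj_iff.1 (hv'.symm.trans hgv.symm)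
        have hieq0 : i = 0 := hnd2.getElem_inj_iff.1 (hb'.symm.trans hgb.symm)
        have : rest.length = 0 := by omega
        exact hrest (List.eq_nil_of_length_eq_zero this)
  · -- tail Hamiltonian
    intro x
    have hnil : ¬ (Walk.cons h1 q).Nil := Walk.not_nil_cons
    rw [Walk.support_tail_of_not_nil _ hnil]
    have hsup : (Walk.cons h1 q).support = v :: ((b :: rest) ++ [v]) := by
      rw [Walk.support_cons, hq, support_mkWalk]; rfl
    rw [hsup]
    simp only [List.tail_cons]
    rw [List.Perm.count_eq hperm]
    refine le_antisymm (List.nodup_iff_count_le_one.1 hnd x) ?_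
    exact List.count_pos_iff.2 (hall x)

end HamAux

namespace EulerAux
variable {α : Type*} [DecidableEq α]

lemma deg_finsum {β : Type*} (s : Finset β) (f : β → Multiset (Sym2 α)) (x : α) :
    deg (∑ i ∈ s, f i) x = ∑ i ∈ s, deg (f i) x := by
  classical
  induction s using Finset.induction_on with
  | empty => simp
  | insert a s h ih => rw [Finset.sum_insert h, Finset.sum_insert h, deg_add, ih]

end EulerAux

namespace HamAux
variable {ι : Type*} [DecidableEq ι]

lemma length_eq_sum_count [Fintype ι] (L : List ι) : L.length = ∑ i, L.count i := by
  induction L with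
  | nil => simp
  | cons a t ih =>
    have : ∀ i : ι, (a :: t).count i = t.count i + (if a = i then 1 else 0) := by
      intro i
      by_cases h : a = i <;> simp [List.count_cons, h]
    simp only [this, Finset.sum_add_distrib, ← ih, Finset.sum_ite_eq, Finset.mem_univ,
      if_true, List.length_cons]

lemma chain'_and {V : Type*} {R S : V → V → Prop} :
    ∀ (l : List V), List.Chain' R l → List.Chain' S l →
      List.Chain' (fun x y => R x y ∧ S x y) l
  | [], _, _ => List.isChain_nil
  | [_], _, _ => List.isChain_singleton _
  | x :: y :: t, hR, hS => by
    unfold List.Chain' at *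
    rw [List.isChain_cons_cons] at *
    exact ⟨⟨hR.1, hS.1⟩, chain'_and (y :: t) hR.2 hS.2⟩

variable {y : ι → ℕ}

lemma map_fst_pmapV : ∀ (l : List (ι × ℕ)) (H : ∀ p ∈ l, p.2 < y p.1),
    (l.pmap (fun p hp => (⟨p.1, ⟨p.2, hp⟩⟩ : Σ i, Fin (y i))) H).map Sigma.fst
      = l.map Prod.fst
  | [], _ => rfl
  | p :: t, H => by
    simp only [List.pmap, List.map_cons, map_fst_pmapV t]

lemma nodup_pmapV (l : List (ι × ℕ)) (H : ∀ p ∈ l, p.2 < y p.1) (hl : l.Nodup) :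
    (l.pmap (fun p hp => (⟨p.1, ⟨p.2, hp⟩⟩ : Σ i, Fin (y i))) H).Nodup := by
  refine List.Nodup.pmap ?_ hl
  rintro ⟨p1, p2⟩ hp ⟨q1, q2⟩ hq h
  obtain ⟨h1, h2⟩ := Sigma.mk.inj_iff.1 h
  subst h1
  have := eq_of_heq h2
  have h3 : p2 = q2 := Fin.mk.inj_iff.1 this
  rw [h3]

end HamAux

namespace HamAux

lemma exists_three {β : Type*} (l : List β) (h : 3 ≤ l.length) :
    ∃ v b rest, l = v :: b :: rest ∧ rest ≠ [] := by
  match l, h with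
  | v :: b :: r :: t, _ => exact ⟨v, b, r :: t, rfl, by simp⟩

end HamAux

open EulerAux HamAux

/-- Let `S` be a finite connected undirected graph on `q` nodes, possibly with
self-loops, with `m` edges, and let `c ∈ ℕ^m` be strictly positive on every edge
and `y = Zc ∈ ℕ^q` (so `2 y i` equals the `c`-weighted degree of node `i`) with
`1ᵀy ≥ 3`. Then the complete `S`-partite graph `K_y`, having `y i` vertices over
node `u_i` (distinct vertices over `u_i`, `u_j` adjacent iff `(u_i,u_j) ∈ E(S)`),
contains a Hamilton cycle. -/
theorem complete_S_partite_hamiltonian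
    (q m : ℕ) (ep : Fin m → Fin q × Fin q)
    (adjS : Fin q → Fin q → Prop)
    (hadj : ∀ i j, adjS i j ↔ ∃ e, ep e = (i, j) ∨ ep e = (j, i))
    (hconn : ∀ i j : Fin q, Relation.ReflTransGen adjS i j)
    (c : Fin m → ℕ) (hc : ∀ e, 0 < c e)
    (y : Fin q → ℕ)
    (hy : ∀ i, 2 * y i = ∑ e, ((if (ep e).1 = i then c e else 0)
        + (if (ep e).2 = i then c e else 0)))
    (hN : 3 ≤ ∑ i, y i)
    (K : SimpleGraph (Σ i : Fin q, Fin (y i)))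
    (hK : ∀ v w : Σ i : Fin q, Fin (y i), K.Adj v w ↔ v ≠ w ∧ adjS v.1 w.1) :
    ∃ (v : Σ i : Fin q, Fin (y i)) (p : K.Walk v v), p.IsHamiltonianCycle := by
  classical
  set E : Multiset (Sym2 (Fin q)) :=
    ∑ e : Fin m, Multiset.replicate (c e) s((ep e).1, (ep e).2) with hE
  have hdegE : ∀ i, deg E i = 2 * y i := by
    intro i
    rw [hE, deg_finsum, hy i]
    refine Finset.sum_congr rfl fun e _ => ?_
    rw [deg_replicate, degS_mk]
    split_ifs <;> ring
  have hmemE : ∀ u w : Fin q, s(u, w) ∈ E ↔ adjS u w := by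
    intro u w
    rw [hE]
    constructor
    · intro h
      obtain ⟨e, _, hmem⟩ := Multiset.mem_sum.1 h
      have heq := (Multiset.mem_replicate.1 hmem).2
      rcases Sym2.eq_iff.1 heq with ⟨h1, h2⟩ | ⟨h1, h2⟩
      · exact (hadj u w).2 ⟨e, Or.inl (by rw [h1, h2])⟩
      · exact (hadj u w).2 ⟨e, Or.inr (by rw [h1, h2])⟩
    · intro h
      obtain ⟨e, he⟩ := (hadj u w).1 h
      refine Multiset.mem_sum.2 ⟨e, Finset.mem_univ e,
        Multiset.mem_replicate.2 ⟨(hc e).ne', ?_⟩⟩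
      rcases he with he | he <;> rw [he]
      exact Sym2.eq_swap
  have hypos : ∀ i, 0 < y i := by
    intro i
    by_contra h0
    push_neg at h0
    have hyi : y i = 0 := by omega
    obtain ⟨j, _, hj⟩ := Finset.exists_ne_zero_of_sum_ne_zero
      (s := (Finset.univ : Finset (Fin q))) (f := y) (by omega)
    have hij : i ≠ j := fun h => hj (h ▸ hyi)
    rcases Relation.ReflTransGen.cases_head (hconn i j) with h | ⟨k, hik, _⟩
    · exact hij h
    · obtain ⟨e, he⟩ := (hadj i k).1 hik
      have hsum : (∑ e, ((if (ep e).1 = i then c e else 0)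
          + (if (ep e).2 = i then c e else 0))) = 0 := by
        rw [← hy i, hyi]
      have hterm := (Finset.sum_eq_zero_iff.1 hsum) e (Finset.mem_univ e)
      have hce := hc e
      rcases he with he | he <;> rw [he] at hterm <;> simp at hterm <;> omega
  have hdeg : ∀ x, Even (deg E x) := fun x => by rw [hdegE]; exact even_two_mul _
  have hconnE : ∀ u w : Fin q, 0 < deg E u → 0 < deg E w →
      Relation.ReflTransGen (fun p r => s(p, r) ∈ E) u w := by
    intro u w _ _
    exact Relation.ReflTransGen.mono (fun p r h => (hmemE p r).2 h) u w (hconn u w)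
  have hne : E ≠ 0 := by
    obtain ⟨j, _, hj⟩ := Finset.exists_ne_zero_of_sum_ne_zero
      (s := (Finset.univ : Finset (Fin q))) (f := y) (by omega)
    intro h0
    have h1 := hdegE j
    rw [h0] at h1
    simp at h1
    omega
  obtain ⟨a, t, heul⟩ := euler hdeg hconnE hne
  set L : List (Fin q) := a :: t with hL
  have hcount : ∀ x, L.count x = y x := by
    intro x
    have h1 := deg_cEdges a t x
    rw [heul, hdegE] at h1
    rw [hL]
    omega
  have hlenL : L.length = ∑ i, y i := by
    rw [length_eq_sum_count L]
    exact Finset.sum_congr rfl fun i _ => hcount i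
  have hchE : List.Chain' (fun u w => s(u, w) ∈ E) (a :: (t ++ [a])) :=
    chain'_of_wEdges_le _ (le_of_eq heul)
  have hchS : List.Chain' (fun u w : Fin q => adjS u w) (a :: (t ++ [a])) :=
    hchE.imp (fun {u w} h => (hmemE u w).1 h)
  -- labelled list
  have hbound : ∀ p ∈ lab L, p.2 < y p.1 := by
    intro p hp
    have := snd_lt_of_mem_lab hp
    rwa [hcount] at this
  set M : List (Σ i : Fin q, Fin (y i)) :=
    (lab L).pmap (fun p hp => (⟨p.1, ⟨p.2, hp⟩⟩ : Σ i : Fin q, Fin (y i))) hbound with hM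
  have hMfst : M.map Sigma.fst = L := by
    rw [hM, map_fst_pmapV, map_fst_lab]
  have hMnd : M.Nodup := nodup_pmapV (lab L) hbound (nodup_lab L)
  have hMlen : M.length = ∑ i, y i := by
    rw [← hlenL, ← hMfst, List.length_map]
  have hall : ∀ x : Σ i : Fin q, Fin (y i), x ∈ M := by
    have hcard : M.toFinset.card = Fintype.card (Σ i : Fin q, Fin (y i)) := by
      rw [List.toFinset_card_of_nodup hMnd, hMlen]
      simp [Fintype.card_sigma]
    have huniv := Finset.eq_univ_of_card M.toFinset hcard
    intro x
    have hx : x ∈ M.toFinset := by rw [huniv]; exact Finset.mem_univ x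
    exact List.mem_toFinset.1 hx
  obtain ⟨v, b, rest, hMeq, hrest⟩ := exists_three M (by omega)
  have hMnd' : (v :: b :: rest).Nodup := hMeq ▸ hMnd
  have hfst' : (v :: b :: rest).map Sigma.fst = a :: t := by
    rw [← hMeq, hMfst]
  have hva : v.1 = a := by
    have h := hfst'
    simp only [List.map_cons, List.cons.injEq] at h
    exact h.1
  -- chains
  have hmapeq : ((v :: b :: rest) ++ [v]).map Sigma.fst = a :: (t ++ [a]) := by
    rw [List.map_append, hfst', List.map_singleton, hva]
    rfl
  have hchA : List.Chain' (fun x y_1 : (Σ i : Fin q, Fin (y i)) => adjS x.1 y_1.1)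
      ((v :: b :: rest) ++ [v]) := by
    unfold List.Chain'
    rw [← List.isChain_map (f := Sigma.fst) (R := adjS)]
    rw [hmapeq]
    exact hchS
  have hchNe : List.Chain' (fun x y_1 : (Σ i : Fin q, Fin (y i)) => x ≠ y_1)
      ((v :: b :: rest) ++ [v]) := by
    unfold List.Chain'
    rw [List.isChain_append]
    refine ⟨List.Pairwise.isChain hMnd', List.isChain_singleton v, ?_⟩
    intro x hx z hz
    simp only [List.head?_cons, Option.mem_def, Option.some.injEq] at hz
    subst hz
    rw [List.getLast?_eq_getLast (by simp), Option.mem_def, Option.some.injEq] at hx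
    subst hx
    have h1 : (v :: b :: rest).getLast (by simp) = (b :: rest).getLast (by simp) :=
      List.getLast_cons (by simp)
    rw [h1]
    have h2 := List.getLast_mem (l := b :: rest) (by simp)
    have h3 : v ∉ b :: rest := (List.nodup_cons.1 hMnd').1
    intro hcontra
    rw [hcontra] at h2
    exact h3 h2
  have hchK : List.Chain' K.Adj ((v :: b :: rest) ++ [v]) := by
    have := chain'_and _ hchNe hchA
    exact this.imp (fun {x z} h => (hK x z).2 h)
  have hchain : List.Chain K.Adj v ((b :: rest) ++ [v]) := by
    have h := hchK
    rw [List.cons_append] at h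
    exact h
  obtain ⟨p, hp⟩ := ham_of_list K v b rest hrest hMnd' hchain
    (fun x => hMeq ▸ hall x)
  exact ⟨v, p, hp⟩
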